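/- Let X be a nonempty continuum (connected compact metric space), t ≥ diam X with t > 0, and p ≥ 2 an integer. Then d_GH(H(t·Δ_p), H(X)) = d_GH(t·Δ_p, X) = t/2. -/

import Mathlib

open Metric Set TopologicalSpace GromovHausdorff

instance {α : Type*} [TopologicalSpace α] [Nonempty α] :
    Nonempty (NonemptyCompacts α) :=
  ⟨⟨⟨{Classical.arbitrary α}, isCompact_singleton⟩, Set.singleton_nonempty _⟩⟩

section Aux

/-- Upper bound: `ghDist A B ≤ t/2` when both diameters are at most `t`. -/
lemma aux_ghDist_le_half (A B : Type*) [MetricSpace A] [CompactSpace A] [Nonempty A]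
    [MetricSpace B] [CompactSpace B] [Nonempty B] {t : ℝ} (ht : 0 < t)
    (hdA : Metric.diam (Set.univ : Set A) ≤ t) (hdB : Metric.diam (Set.univ : Set B) ≤ t) :
    ghDist A B ≤ t / 2 := by
  have hAle : ∀ a a' : A, dist a a' ≤ t := fun a a' =>
    (dist_le_diam_of_mem isCompact_univ.isBounded (mem_univ _) (mem_univ _)).trans hdA
  have hBle : ∀ b b' : B, dist b b' ≤ t := fun b b' =>
    (dist_le_diam_of_mem isCompact_univ.isBounded (mem_univ _) (mem_univ _)).trans hdB
  letI m : MetricSpace (A ⊕ B) :=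
    { dist := fun x y =>
        match x, y with
        | .inl a, .inl a' => dist a a'
        | .inr b, .inr b' => dist b b'
        | _, _ => t / 2
      dist_self := by rintro (a | b) <;> simp
      dist_comm := by rintro (a | b) (a' | b') <;> simp [dist_comm]
      dist_triangle := by
        rintro (a | b) (a' | b') (a'' | b'') <;>
          simp only [] <;>
          first
            | exact dist_triangle _ _ _
            | (have := dist_nonneg (x := a') (y := a''); linarith)
            | (have := dist_nonneg (x := b') (y := b''); linarith)
            | (have := dist_nonneg (x := a) (y := a'); linarith)
            | (have := dist_nonneg (x := b) (y := b'); linarith)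
            | (have := hAle a a''; linarith)
            | (have := hBle b b''; linarith)
      eq_of_dist_eq_zero := by
        rintro (a | b) (a' | b') h <;> simp only [] at h
        · exact congrArg _ (eq_of_dist_eq_zero h)
        · exact absurd h (by positivity)
        · exact absurd h (by positivity)
        · exact congrArg _ (eq_of_dist_eq_zero h) }
  have hisoL : Isometry (Sum.inl : A → A ⊕ B) := Isometry.of_dist_eq fun _ _ => rfl
  have hisoR : Isometry (Sum.inr : B → A ⊕ B) := Isometry.of_dist_eq fun _ _ => rfl
  refine (ghDist_le_hausdorffDist hisoL hisoR).trans ?_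
  apply hausdorffDist_le_of_mem_dist (by positivity)
  · rintro x ⟨a, rfl⟩
    exact ⟨Sum.inr (Classical.arbitrary B), mem_range_self _, le_of_eq rfl⟩
  · rintro x ⟨b, rfl⟩
    exact ⟨Sum.inl (Classical.arbitrary A), mem_range_self _, le_of_eq rfl⟩

/-- Lower bound: `t/2 ≤ ghDist A B` when `A` has at least two points, all distinct points
of `A` are at distance at least `t`, and `B` is connected. -/
lemma aux_half_le_ghDist (A B : Type*) [MetricSpace A] [CompactSpace A] [Nonempty A]
    [MetricSpace B] [CompactSpace B] [Nonempty B] [ConnectedSpace B] {t : ℝ}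
    (hA : ∀ a a' : A, a ≠ a' → t ≤ dist a a') (a₀ a₁ : A) (hne01 : a₀ ≠ a₁) :
    t / 2 ≤ ghDist A B := by
  by_contra hcon
  push_neg at hcon
  obtain ⟨Φ, Ψ, hΦ, hΨ, hd⟩ := ghDist_eq_hausdorffDist A B
  rw [hd] at hcon
  have hfin : EMetric.hausdorffEdist (range Φ) (range Ψ) ≠ ⊤ :=
    hausdorffEdist_ne_top_of_nonempty_of_bounded (range_nonempty _) (range_nonempty _)
      (isCompact_range hΦ.continuous).isBounded (isCompact_range hΨ.continuous).isBounded
  set U : A → Set B := fun a => Ψ ⁻¹' ball (Φ a) (t / 2) with hUdef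
  have hopen : ∀ a, IsOpen (U a) := fun a => isOpen_ball.preimage hΨ.continuous
  have hcover : ∀ b : B, ∃ a, b ∈ U a := by
    intro b
    obtain ⟨z, hz, hdz⟩ := exists_dist_lt_of_hausdorffDist_lt' (mem_range_self b) hcon hfin
    obtain ⟨a, rfl⟩ := hz
    refine ⟨a, ?_⟩
    simp only [hUdef, mem_preimage, mem_ball]
    simpa [dist_comm] using hdz
  have hnon : ∀ a, (U a).Nonempty := by
    intro a
    obtain ⟨z, hz, hdz⟩ := exists_dist_lt_of_hausdorffDist_lt (mem_range_self a) hcon hfin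
    obtain ⟨b, rfl⟩ := hz
    refine ⟨b, ?_⟩
    simp only [hUdef, mem_preimage, mem_ball]
    simpa [dist_comm] using hdz
  have hdisj : ∀ a a' : A, a ≠ a' → ∀ b, b ∈ U a → b ∈ U a' → False := by
    intro a a' hne b hb hb'
    have h1 : dist (Ψ b) (Φ a) < t / 2 := by simpa [hUdef, mem_ball] using hb
    have h2 : dist (Ψ b) (Φ a') < t / 2 := by simpa [hUdef, mem_ball] using hb'
    have h3 : dist (Φ a) (Φ a') < t := by
      have := dist_triangle (Φ a) (Ψ b) (Φ a')
      rw [dist_comm (Φ a) (Ψ b)] at this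
      linarith
    rw [hΦ.dist_eq] at h3
    exact absurd h3 (not_lt.2 (hA a a' hne))
  have hpc : IsPreconnected (univ : Set B) := isPreconnected_univ
  obtain ⟨b, -, hb0, hbv⟩ :=
    hpc (U a₀) (⋃ a ∈ ({a₀}ᶜ : Set A), U a) (hopen a₀)
      (isOpen_biUnion fun a _ => hopen a)
      (by
        intro b _
        obtain ⟨a, hab⟩ := hcover b
        by_cases h : a = a₀
        · exact Or.inl (h ▸ hab)
        · exact Or.inr (mem_biUnion h hab))
      ⟨(hnon a₀).choose, mem_univ _, (hnon a₀).choose_spec⟩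
      ⟨(hnon a₁).choose, mem_univ _, mem_biUnion (by simpa using hne01.symm) (hnon a₁).choose_spec⟩
  obtain ⟨a, ha, hba⟩ := mem_iUnion₂.1 hbv
  exact hdisj a₀ a (fun h => ha (by simp [h.symm])) b hb0 hba

lemma aux_ghDist_eq (A B : Type*) [MetricSpace A] [CompactSpace A] [Nonempty A]
    [MetricSpace B] [CompactSpace B] [Nonempty B] [ConnectedSpace B] {t : ℝ} (ht : 0 < t)
    (hA : ∀ a a' : A, a ≠ a' → t ≤ dist a a') (a₀ a₁ : A) (hne01 : a₀ ≠ a₁)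
    (hdA : Metric.diam (Set.univ : Set A) ≤ t) (hdB : Metric.diam (Set.univ : Set B) ≤ t) :
    ghDist A B = t / 2 :=
  le_antisymm (aux_ghDist_le_half A B ht hdA hdB) (aux_half_le_ghDist A B hA a₀ a₁ hne01)

lemma aux_exists_fin_range {X : Type*} {s : Set X} (hfin : s.Finite) (hne : s.Nonempty) :
    ∃ n : ℕ, ∃ g : Fin (n + 1) → X, Set.range g = s := by
  classical
  set l : List X := hfin.toFinset.toList with hl
  have hlne : l ≠ [] := by
    simp only [hl, ne_eq, Finset.toList_eq_nil]
    exact Finset.nonempty_iff_ne_empty.1 (by simpa using hne)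
  obtain ⟨n, hn⟩ : ∃ n, l.length = n + 1 :=
    ⟨l.length - 1, (Nat.succ_pred_eq_of_pos (List.length_pos_iff.2 hlne)).symm⟩
  refine ⟨n, fun i => l.get (Fin.cast hn.symm i), ?_⟩
  have hsurj : Function.Surjective (Fin.cast hn.symm : Fin (n + 1) → Fin l.length) :=
    (finCongr hn.symm).surjective
  have hcomp : (fun i => l.get (Fin.cast hn.symm i)) = l.get ∘ Fin.cast hn.symm := rfl
  rw [hcomp, Set.range_comp, hsurj.range_eq, image_univ, Set.range_list_get]
  ext x
  simp [hl, Set.Finite.mem_toFinset hfin]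

/-- The hyperspace of a connected compact metric space is connected. -/
lemma aux_connectedSpace_nonemptyCompacts (X : Type*) [MetricSpace X] [CompactSpace X]
    [ConnectedSpace X] [Nonempty X] : ConnectedSpace (NonemptyCompacts X) := by
  classical
  set F : ∀ n : ℕ, (Fin (n + 1) → X) → NonemptyCompacts X := fun n f =>
    ⟨⟨Set.range f, (Set.finite_range f).isCompact⟩, Set.range_nonempty f⟩ with hF
  have hFdist : ∀ n (f g : Fin (n + 1) → X), dist (F n f) (F n g) ≤ dist f g := by
    intro n f g
    rw [NonemptyCompacts.dist_eq]
    apply hausdorffDist_le_of_mem_dist dist_nonneg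
    · rintro x ⟨i, rfl⟩
      exact ⟨g i, mem_range_self i, dist_le_pi_dist f g i⟩
    · rintro x ⟨i, rfl⟩
      exact ⟨f i, mem_range_self i, by rw [dist_comm]; exact dist_le_pi_dist f g i⟩
  have hFcont : ∀ n, Continuous (F n) := by
    intro n
    exact (LipschitzWith.of_dist_le_mul (K := 1) fun f g => by
      simpa using hFdist n f g).continuous
  have hFconn : ∀ n, IsPreconnected (Set.range (F n)) := by
    intro n
    rw [← image_univ]
    exact isPreconnected_univ.image (F n) (hFcont n).continuousOn
  -- the union of all `range (F n)` is preconnected, as they share the singletons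
  set x₀ : X := Classical.arbitrary X
  have hmem : ∀ n, (⟨⟨{x₀}, isCompact_singleton⟩, Set.singleton_nonempty x₀⟩ :
      NonemptyCompacts X) ∈ Set.range (F n) := by
    intro n
    refine ⟨fun _ => x₀, ?_⟩
    apply NonemptyCompacts.ext
    simp [hF]
  have hu : IsPreconnected (⋃ n, Set.range (F n)) := by
    rw [← sUnion_range]
    exact isPreconnected_sUnion
      (⟨⟨{x₀}, isCompact_singleton⟩, Set.singleton_nonempty x₀⟩ : NonemptyCompacts X) _
      (by rintro s ⟨n, rfl⟩; exact hmem n) (by rintro s ⟨n, rfl⟩; exact hFconn n)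
  have hdense : Dense (⋃ n, Set.range (F n)) := by
    rw [Metric.dense_iff]
    intro A ε hε
    have htb : TotallyBounded (A : Set X) := A.isCompact.totallyBounded
    obtain ⟨s, hsub, hfin, hcov⟩ :=
      totallyBounded_iff_subset.1 htb {p : X × X | dist p.1 p.2 < ε / 2}
        (dist_mem_uniformity (by positivity))
    have hsne : s.Nonempty := by
      obtain ⟨x, hx⟩ := A.nonempty
      obtain ⟨y, hy, -⟩ := mem_iUnion₂.1 (hcov hx)
      exact ⟨y, hy⟩
    obtain ⟨n, g, hg⟩ := aux_exists_fin_range hfin hsne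
    refine ⟨F n g, ?_, mem_iUnion.2 ⟨n, mem_range_self g⟩⟩
    rw [mem_ball, NonemptyCompacts.dist_eq]
    have : hausdorffDist ((F n g : Set X)) (A : Set X) ≤ ε / 2 := by
      apply hausdorffDist_le_of_mem_dist (by positivity)
      · rintro x hx
        have : x ∈ s := by
          have : (F n g : Set X) = s := by simpa [hF] using hg
          rwa [this] at hx
        exact ⟨x, hsub this, by simp only [dist_self]; positivity⟩
      · intro x hx
        obtain ⟨y, hy, hxy⟩ := mem_iUnion₂.1 (hcov hx)
        refine ⟨y, ?_, le_of_lt hxy⟩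
        have : (F n g : Set X) = s := by simpa [hF] using hg
        rw [this]; exact hy
    linarith
  have hps : PreconnectedSpace (NonemptyCompacts X) :=
    ⟨by rw [← hdense.closure_eq]; exact hu.closure⟩
  exact ⟨inferInstance⟩

end Aux

theorem stmt_17 (X : Type*) [MetricSpace X] [CompactSpace X] [ConnectedSpace X] [Nonempty X]
    (t : ℝ) (ht : 0 < t) (hdiam : Metric.diam (Set.univ : Set X) ≤ t)
    (p : ℕ) (hp : 2 ≤ p) (S : Type*) [MetricSpace S] [Finite S] [Nonempty S]
    (hScard : Nat.card S = p) (hSdist : ∀ x y : S, x ≠ y → dist x y = t) :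
    ghDist (NonemptyCompacts S) (NonemptyCompacts X) = ghDist S X ∧
      ghDist S X = t / 2 := by
  classical
  haveI : Nontrivial S := Finite.one_lt_card_iff_nontrivial.1 (by omega)
  obtain ⟨s₀, s₁, hs01⟩ := exists_pair_ne S
  have hSd : ∀ x y : S, dist x y ≤ t := by
    intro x y
    by_cases h : x = y
    · simp [h, ht.le]
    · exact (hSdist x y h).le
  have hdS : Metric.diam (Set.univ : Set S) ≤ t :=
    diam_le_of_forall_dist_le ht.le fun x _ y _ => hSd x y
  have hXd : ∀ x y : X, dist x y ≤ t := fun x y =>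
    (dist_le_diam_of_mem isCompact_univ.isBounded (mem_univ _) (mem_univ _)).trans hdiam
  -- second part
  have h2 : ghDist S X = t / 2 :=
    aux_ghDist_eq S X ht (fun a a' h => (hSdist a a' h).ge) s₀ s₁ hs01 hdS hdiam
  -- hyperspace distances
  haveI := aux_connectedSpace_nonemptyCompacts X
  have hHSd : ∀ A B : NonemptyCompacts S, A ≠ B → t ≤ dist A B := by
    intro A B hAB
    have hfin : EMetric.hausdorffEdist (A : Set S) (B : Set S) ≠ ⊤ :=
      hausdorffEdist_ne_top_of_nonempty_of_bounded A.nonempty B.nonempty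
        A.isCompact.isBounded B.isCompact.isBounded
    have hne : (A : Set S) ≠ (B : Set S) := fun h => hAB (NonemptyCompacts.ext h)
    have key : ∀ (C D : NonemptyCompacts S), ¬((C : Set S) ⊆ (D : Set S)) →
        EMetric.hausdorffEdist (C : Set S) (D : Set S) ≠ ⊤ → t ≤ hausdorffDist (C : Set S) D := by
      intro C D hsub hfin'
      obtain ⟨x, hxC, hxD⟩ := not_subset.1 hsub
      refine le_trans ?_ (infDist_le_hausdorffDist_of_mem hxC hfin')
      rw [infDist_eq_iInf]
      haveI : Nonempty (D : Set S) := D.nonempty.to_subtype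
      refine le_ciInf fun y => ?_
      have : x ≠ (y : S) := fun h => hxD (h ▸ y.2)
      exact (hSdist x y this).ge
    rw [NonemptyCompacts.dist_eq]
    rcases (not_and_or.1 fun h : (A : Set S) ⊆ B ∧ (B : Set S) ⊆ A =>
        hne (Set.Subset.antisymm h.1 h.2)) with h | h
    · exact key A B h hfin
    · rw [hausdorffDist_comm]
      exact key B A h (by unfold EMetric.hausdorffEdist at hfin ⊢; rwa [EMetric.hausdorffEdist_comm])
  have hdHS : Metric.diam (Set.univ : Set (NonemptyCompacts S)) ≤ t := by
    refine diam_le_of_forall_dist_le ht.le fun A _ B _ => ?_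
    rw [NonemptyCompacts.dist_eq]
    apply hausdorffDist_le_of_mem_dist ht.le
    · intro x hx
      obtain ⟨y, hy⟩ := B.nonempty
      exact ⟨y, hy, hSd x y⟩
    · intro x hx
      obtain ⟨y, hy⟩ := A.nonempty
      exact ⟨y, hy, hSd x y⟩
  have hdHX : Metric.diam (Set.univ : Set (NonemptyCompacts X)) ≤ t := by
    refine diam_le_of_forall_dist_le ht.le fun A _ B _ => ?_
    rw [NonemptyCompacts.dist_eq]
    apply hausdorffDist_le_of_mem_dist ht.le
    · intro x hx
      obtain ⟨y, hy⟩ := B.nonempty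
      exact ⟨y, hy, hXd x y⟩
    · intro x hx
      obtain ⟨y, hy⟩ := A.nonempty
      exact ⟨y, hy, hXd x y⟩
  have hS0 : (⟨⟨{s₀}, isCompact_singleton⟩, Set.singleton_nonempty s₀⟩ : NonemptyCompacts S) ≠
      ⟨⟨{s₁}, isCompact_singleton⟩, Set.singleton_nonempty s₁⟩ := by
    intro h
    apply hs01
    have := congrArg (fun A : NonemptyCompacts S => (A : Set S)) h
    simpa [Set.singleton_eq_singleton_iff] using this
  have h1 : ghDist (NonemptyCompacts S) (NonemptyCompacts X) = t / 2 :=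
    aux_ghDist_eq (NonemptyCompacts S) (NonemptyCompacts X) ht hHSd _ _ hS0 hdHS hdHX
  exact ⟨h1.trans h2.symm, h2⟩
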